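/- If S is a right noetherian semigroup and T is an inverse subsemigroup of S, then the semilattice of idempotents of T is finite. -/

import Mathlib

/-- A right congruence on a semigroup: an equivalence relation compatible with
right multiplication. -/
def IsRightCongruence {S : Type*} [Semigroup S] (r : S → S → Prop) : Prop :=
  Equivalence r ∧ ∀ a b c : S, r a b → r (a * c) (b * c)

/-- A right congruence is finitely generated if it is the least right congruence
containing some finite set of pairs. -/
def IsFGRightCongruence {S : Type*} [Semigroup S] (r : S → S → Prop) : Prop :=
  IsRightCongruence r ∧ ∃ X : Finset (S × S),
    (∀ p ∈ X, r p.1 p.2) ∧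
    ∀ r' : S → S → Prop, IsRightCongruence r' → (∀ p ∈ X, r' p.1 p.2) →
      ∀ a b : S, r a b → r' a b

/-- A semigroup is right noetherian if every right congruence on it is finitely
generated. -/
def RightNoetherian (S : Type*) [Semigroup S] : Prop :=
  ∀ r : S → S → Prop, IsRightCongruence r → IsFGRightCongruence r

section Aux

variable {S : Type*} [Semigroup S]

private theorem aux_idem {T : Set S}
    (hT : ∀ a ∈ T, ∀ b ∈ T, a * b ∈ T)
    (hinv : ∀ a ∈ T, ∃! b : S, b ∈ T ∧ a * b * a = a ∧ b * a * b = b)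
    {e f : S} (he : e ∈ T) (hee : e * e = e) (hf : f ∈ T) (hff : f * f = f) :
    (e * f) * (e * f) = e * f := by
  have hef : e * f ∈ T := hT e he f hf
  have hee' : ∀ z : S, e * (e * z) = e * z := fun z => by rw [← mul_assoc, hee]
  have hff' : ∀ z : S, f * (f * z) = f * z := fun z => by rw [← mul_assoc, hff]
  obtain ⟨x, ⟨hxT, hx1, hx2⟩, hxu⟩ := hinv (e * f) hef
  have hx1n : e * (f * (x * (e * f))) = e * f := by
    simpa only [mul_assoc] using hx1
  have hx2' : ∀ z : S, x * (e * (f * (x * z))) = x * z := fun z => by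
    have := congrArg (· * z) hx2
    simpa only [mul_assoc] using this
  have hyT : f * x * e ∈ T := hT _ (hT f hf x hxT) e he
  have hy : f * x * e = x := by
    apply hxu
    refine ⟨hyT, ?_, ?_⟩
    · simp only [mul_assoc, hee', hff']
      exact hx1n
    · simp only [mul_assoc, hee', hff', hx2']
  have hxx : x * x = x := by
    rw [← hy]
    simp only [mul_assoc, hx2']
  obtain ⟨x2, _, hx2u⟩ := hinv x hxT
  have h1 : e * f = x2 := hx2u (e * f) ⟨hef, hx2, hx1⟩
  have h2 : x = x2 := hx2u x ⟨hxT, by rw [hxx, hxx], by rw [hxx, hxx]⟩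
  rw [h1, ← h2]
  exact hxx

private theorem aux_comm {T : Set S}
    (hT : ∀ a ∈ T, ∀ b ∈ T, a * b ∈ T)
    (hinv : ∀ a ∈ T, ∃! b : S, b ∈ T ∧ a * b * a = a ∧ b * a * b = b)
    {e f : S} (he : e ∈ T) (hee : e * e = e) (hf : f ∈ T) (hff : f * f = f) :
    e * f = f * e := by
  have hef : e * f ∈ T := hT e he f hf
  have hfe : f * e ∈ T := hT f hf e he
  have hefid := aux_idem hT hinv he hee hf hff
  have hfeid := aux_idem hT hinv hf hff he hee
  have hee' : ∀ z : S, e * (e * z) = e * z := fun z => by rw [← mul_assoc, hee]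
  have hff' : ∀ z : S, f * (f * z) = f * z := fun z => by rw [← mul_assoc, hff]
  have hefn : e * (f * (e * f)) = e * f := by simpa only [mul_assoc] using hefid
  have hfen : f * (e * (f * e)) = f * e := by simpa only [mul_assoc] using hfeid
  obtain ⟨x, _, hxu⟩ := hinv (e * f) hef
  have h1 : e * f = x := hxu (e * f) ⟨hef, by rw [hefid, hefid], by rw [hefid, hefid]⟩
  have h2 : f * e = x := by
    apply hxu
    refine ⟨hfe, ?_, ?_⟩
    · simp only [mul_assoc, hee', hff']
      exact hefn
    · simp only [mul_assoc, hee', hff']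
      exact hfen
  exact h1.trans h2.symm

private theorem auxA (h : RightNoetherian S) (E' : Set S)
    (hidem : ∀ e ∈ E', e * e = e) (hinf : E'.Infinite) :
    ∃ f, f ∈ E' ∧ {e | e ∈ E' ∧ f * e = e ∧ e ≠ f}.Infinite := by
  classical
  have hIr : ∀ a : S, (∃ e ∈ E', e * a = a) → ∀ c : S, ∃ e ∈ E', e * (a * c) = a * c := by
    rintro a ⟨e, heE, hea⟩ c
    exact ⟨e, heE, by rw [← mul_assoc, hea]⟩
  set r : S → S → Prop :=
    fun a b => a = b ∨ ((∃ e ∈ E', e * a = a) ∧ (∃ e ∈ E', e * b = b)) with hrdef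
  have hrc : IsRightCongruence r := by
    constructor
    · refine ⟨fun a => Or.inl rfl, ?_, ?_⟩
      · rintro a b (rfl | hab)
        · exact Or.inl rfl
        · exact Or.inr ⟨hab.2, hab.1⟩
      · rintro a b c (rfl | hab) hbc
        · exact hbc
        · rcases hbc with rfl | hbc
          · exact Or.inr hab
          · exact Or.inr ⟨hab.1, hbc.2⟩
    · rintro a b c (rfl | hab)
      · exact Or.inl rfl
      · exact Or.inr ⟨hIr a hab.1 c, hIr b hab.2 c⟩
  obtain ⟨_, X, hX, hmin⟩ := h r hrc
  obtain ⟨e₀, he₀⟩ := hinf.nonempty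
  set g : S → S := fun a => if ha : ∃ e ∈ E', e * a = a then ha.choose else e₀ with hg
  have hgE : ∀ a, g a ∈ E' := by
    intro a
    simp only [hg]
    split
    · next ha => exact ha.choose_spec.1
    · exact he₀
  have hgI : ∀ a : S, (∃ e ∈ E', e * a = a) → g a * a = a := by
    intro a ha
    simp only [hg, dif_pos ha]
    exact ha.choose_spec.2
  set F : Finset S := X.image (fun p => g p.1) ∪ X.image (fun p => g p.2) with hF
  set r' : S → S → Prop :=
    fun a b => a = b ∨ ((∃ f ∈ F, f * a = a) ∧ (∃ f ∈ F, f * b = b)) with hr'def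
  have hIr' : ∀ a : S, (∃ f ∈ F, f * a = a) → ∀ c : S, ∃ f ∈ F, f * (a * c) = a * c := by
    rintro a ⟨f, hfF, hfa⟩ c
    exact ⟨f, hfF, by rw [← mul_assoc, hfa]⟩
  have hr'c : IsRightCongruence r' := by
    constructor
    · refine ⟨fun a => Or.inl rfl, ?_, ?_⟩
      · rintro a b (rfl | hab)
        · exact Or.inl rfl
        · exact Or.inr ⟨hab.2, hab.1⟩
      · rintro a b c (rfl | hab) hbc
        · exact hbc
        · rcases hbc with rfl | hbc
          · exact Or.inr hab
          · exact Or.inr ⟨hab.1, hbc.2⟩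
    · rintro a b c (rfl | hab)
      · exact Or.inl rfl
      · exact Or.inr ⟨hIr' a hab.1 c, hIr' b hab.2 c⟩
  have hXr' : ∀ p ∈ X, r' p.1 p.2 := by
    intro p hp
    rcases hX p hp with heq | ⟨h1, h2⟩
    · exact Or.inl heq
    · refine Or.inr ⟨⟨g p.1, ?_, hgI _ h1⟩, ⟨g p.2, ?_, hgI _ h2⟩⟩
      · exact Finset.mem_union_left _ (Finset.mem_image_of_mem _ hp)
      · exact Finset.mem_union_right _ (Finset.mem_image_of_mem _ hp)
  have key : ∀ a ∈ E', ∃ f ∈ F, f * a = a := by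
    intro a ha
    obtain ⟨b, hb⟩ := (hinf.diff (Set.finite_singleton a)).nonempty
    have hr0 : r a b :=
      Or.inr ⟨⟨a, ha, hidem a ha⟩, ⟨b, hb.1, hidem b hb.1⟩⟩
    rcases hmin r' hr'c hXr' a b hr0 with heq | hmem
    · exact absurd heq.symm hb.2
    · exact hmem.1
  have hpig : ∃ f ∈ F, {e | e ∈ E' ∧ f * e = e}.Infinite := by
    by_contra hc
    push_neg at hc
    have hfin : (⋃ f ∈ (F : Set S), {e | e ∈ E' ∧ f * e = e}).Finite :=
      Set.Finite.biUnion F.finite_toSet (fun f hf => hc f hf)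
    refine hinf (hfin.subset ?_)
    intro a ha
    obtain ⟨f, hfF, hfa⟩ := key a ha
    exact Set.mem_biUnion hfF ⟨ha, hfa⟩
  obtain ⟨f, hfF, hinf2⟩ := hpig
  have hfE : f ∈ E' := by
    rcases Finset.mem_union.mp hfF with hmem | hmem <;>
    · obtain ⟨p, _, rfl⟩ := Finset.mem_image.mp hmem
      exact hgE _
  refine ⟨f, hfE, ?_⟩
  refine (hinf2.diff (Set.finite_singleton f)).mono ?_
  intro a ha
  exact ⟨ha.1.1, ha.1.2, ha.2⟩

end Aux

theorem idempotents_finite_of_inverse_subsemigroup (S : Type*) [Semigroup S]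
    (h : RightNoetherian S) (T : Set S)
    (hT : ∀ a ∈ T, ∀ b ∈ T, a * b ∈ T)
    (hinv : ∀ a ∈ T, ∃! b : S, b ∈ T ∧ a * b * a = a ∧ b * a * b = b) :
    {e : S | e ∈ T ∧ e * e = e}.Finite := by
  classical
  by_contra hfin
  set E : Set S := {e : S | e ∈ T ∧ e * e = e} with hEdef
  have hE : E.Infinite := hfin
  have hcomm : ∀ e ∈ E, ∀ f ∈ E, e * f = f * e := fun e he f hf =>
    aux_comm hT hinv he.1 he.2 hf.1 hf.2
  have key : ∀ E' : Set S, E' ⊆ E → E'.Infinite →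
      ∃ f, f ∈ E' ∧ {e | e ∈ E' ∧ f * e = e ∧ e ≠ f}.Infinite :=
    fun E' hs hi => auxA h E' (fun e he => (hs he).2) hi
  let Q := {A : Set S // A ⊆ E ∧ A.Infinite}
  let fc : Q → S := fun A => (key A.1 A.2.1 A.2.2).choose
  have fc_spec : ∀ A : Q, fc A ∈ A.1 ∧ {e | e ∈ A.1 ∧ fc A * e = e ∧ e ≠ fc A}.Infinite :=
    fun A => (key A.1 A.2.1 A.2.2).choose_spec
  let nxt : Q → Q := fun A => ⟨{e | e ∈ A.1 ∧ fc A * e = e ∧ e ≠ fc A},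
    fun e he => A.2.1 he.1, (fc_spec A).2⟩
  let seq : ℕ → Q := fun n => nxt^[n] ⟨E, subset_rfl, hE⟩
  let c : ℕ → S := fun n => fc (seq n)
  have hseq : ∀ n, seq (n + 1) = nxt (seq n) := fun n =>
    Function.iterate_succ_apply' _ _ _
  have hcE : ∀ n, c n ∈ E := fun n => (seq n).2.1 (fc_spec (seq n)).1
  have hstep : ∀ n, c n * c (n + 1) = c (n + 1) ∧ c (n + 1) ≠ c n := by
    intro n
    have h1 : c (n + 1) ∈ (seq (n + 1)).1 := (fc_spec (seq (n + 1))).1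
    rw [hseq n] at h1
    exact ⟨h1.2.1, h1.2.2⟩
  have hup : ∀ (a b : S) (m n : ℕ), m ≤ n → c m * a = c m * b → c n * a = c n * b := by
    intro a b m n hmn hab
    have hmono : ∀ m n : ℕ, m ≤ n → c m * c n = c n := by
      intro m n hmn
      induction n with
      | zero =>
          obtain rfl := Nat.le_zero.mp hmn
          exact (hcE 0).2
      | succ k ih =>
          rcases Nat.lt_or_ge m (k + 1) with hlt | hge
          · have hm : m ≤ k := Nat.lt_succ_iff.mp hlt
            rw [← (hstep k).1, ← mul_assoc, ih hm]
          · have heq : m = k + 1 := le_antisymm hmn hge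
            subst heq
            exact (hcE (k + 1)).2
    have h1 : c n * c m = c n := by
      rw [hcomm _ (hcE n) _ (hcE m)]
      exact hmono m n hmn
    calc c n * a = c n * (c m * a) := by rw [← mul_assoc, h1]
      _ = c n * (c m * b) := by rw [hab]
      _ = c n * b := by rw [← mul_assoc, h1]
  set ρ : S → S → Prop := fun a b => ∃ n, c n * a = c n * b with hρdef
  have hρc : IsRightCongruence ρ := by
    constructor
    · refine ⟨fun a => ⟨0, rfl⟩, ?_, ?_⟩
      · rintro a b ⟨n, hn⟩
        exact ⟨n, hn.symm⟩
      · rintro a b d ⟨m, hm⟩ ⟨n, hn⟩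
        exact ⟨max m n, (hup _ _ _ _ (le_max_left m n) hm).trans
          (hup _ _ _ _ (le_max_right m n) hn)⟩
    · rintro a b d ⟨n, hn⟩
      exact ⟨n, by rw [← mul_assoc, hn, mul_assoc]⟩
  obtain ⟨_, X, hX, hmin⟩ := h ρ hρc
  let nf : S × S → ℕ := fun p =>
    if hp : ∃ n, c n * p.1 = c n * p.2 then Nat.find hp else 0
  let N : ℕ := X.sup nf
  have hXN : ∀ p ∈ X, c N * p.1 = c N * p.2 := by
    intro p hp
    have hex : ∃ n, c n * p.1 = c n * p.2 := hX p hp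
    have h1 : c (nf p) * p.1 = c (nf p) * p.2 := by
      simp only [nf, dif_pos hex]
      exact Nat.find_spec hex
    exact hup _ _ _ _ (Finset.le_sup hp) h1
  set r' : S → S → Prop := fun a b => c N * a = c N * b with hr'def
  have hr'c : IsRightCongruence r' := by
    constructor
    · exact ⟨fun a => rfl, fun h12 => h12.symm, fun h12 h23 => h12.trans h23⟩
    · intro a b d hab
      show c N * (a * d) = c N * (b * d)
      rw [← mul_assoc, hab, mul_assoc]
  have hρN : ρ (c N) (c (N + 1)) := by
    refine ⟨N + 1, ?_⟩
    rw [hcomm _ (hcE (N + 1)) _ (hcE N), (hstep N).1, (hcE (N + 1)).2]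
  have hfinal : c N * c N = c N * c (N + 1) := hmin r' hr'c hXN _ _ hρN
  rw [(hcE N).2] at hfinal
  have hcontr : c N = c (N + 1) := by rw [hfinal, (hstep N).1]
  exact (hstep N).2 hcontr.symm
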